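/- arXiv:2007.14483 — 9 statements merged into one kernel-verified Lean document; each statement's English description precedes it below -/
import Mathlib

section
/- In a commutative idempotent involutive residuated lattice, for every element x, the element 0_x := x ∧ ¬x equals x · ¬x. -/
/-- A commutative idempotent involutive residuated lattice. -/
class CIdInRL (α : Type*) extends Lattice α, CommMonoid α, Zero α where
  arrow : α → α → α
  residuation : ∀ x y z : α, x * y ≤ z ↔ y ≤ arrow x z
  idem : ∀ x : α, x * x = x
  involutive : ∀ x : α, arrow (arrow x 0) 0 = x

namespace CIdInRL
variable {α : Type*} [CIdInRL α]
/-- linear negation ¬x := x → 0 -/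
def neg (x : α) : α := arrow x 0
/-- 0_x := x ∧ ¬x -/
def zx (x : α) : α := x ⊓ neg x
/-- 1_x := x ∨ ¬x -/
def ox (x : α) : α := x ⊔ neg x
/-- monoidal order x ⊑ y iff x·y = x -/
def mleq (x y : α) : Prop := x * y = x
end CIdInRL


open CIdInRL in
private lemma myMulLeMulLeft {α : Type*} [CIdInRL α] (x : α) {y z : α} (h : y ≤ z) :
    x * y ≤ x * z := by
  rw [residuation]
  exact h.trans ((residuation x z (x * z)).mp le_rfl)

open CIdInRL in
theorem stmt0 {α : Type*} [CIdInRL α] (x : α) : x ⊓ neg x = x * neg x := by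
  have hneg : x * neg x ≤ (0 : α) := (residuation x (neg x) 0).mpr le_rfl
  have h1 : x * neg x ≤ neg x := by
    show x * neg x ≤ arrow x 0
    refine (residuation x (x * neg x) 0).mp ?_
    rw [← mul_assoc, idem]; exact hneg
  have h2 : x * neg x ≤ x := by
    conv_rhs => rw [← involutive x]
    refine (residuation (arrow x 0) (x * neg x) 0).mp ?_
    show neg x * (x * neg x) ≤ 0
    rw [mul_comm, mul_assoc, idem]; exact hneg
  refine le_antisymm ?_ (le_inf h2 h1)
  calc x ⊓ neg x = (x ⊓ neg x) * (x ⊓ neg x) := (idem _).symm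
    _ ≤ (x ⊓ neg x) * neg x := myMulLeMulLeft _ inf_le_right
    _ = neg x * (x ⊓ neg x) := mul_comm _ _
    _ ≤ neg x * x := myMulLeMulLeft _ inf_le_left
    _ = x * neg x := mul_comm _ _
end

section
/- In a commutative idempotent involutive residuated lattice, for every element x, one has 0_x ≤ 0 ≤ 1 ≤ 1_x, and 0_x · 1_x = 0_x. -/
section Aux
open CIdInRL
variable {α : Type*} [CIdInRL α]

private lemma rmono {x y z : α} (h : y ≤ z) : x * y ≤ x * z :=
  (residuation x y (x*z)).mpr (h.trans ((residuation x z (x*z)).mp le_rfl))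

private lemma rmono' {x y z : α} (h : y ≤ z) : y * x ≤ z * x := by
  rw [mul_comm y x, mul_comm z x]; exact rmono h

private lemma mul_neg_le (x : α) : x * neg x ≤ 0 :=
  (residuation x (neg x) 0).mpr le_rfl

private lemma neg_neg' (x : α) : neg (neg x) = x := involutive x

private lemma neg_antitone {x y : α} (h : x ≤ y) : neg y ≤ neg x := by
  refine (residuation x (neg y) 0).mp ?_
  calc x * neg y = neg y * x := mul_comm _ _
    _ ≤ neg y * y := rmono h
    _ = y * neg y := mul_comm _ _
    _ ≤ 0 := mul_neg_le y

private lemma zx_le_zero' (x : α) : zx x ≤ (0:α) := by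
  have h1 : zx x * zx x ≤ x * neg x := by
    calc zx x * zx x ≤ zx x * neg x := rmono inf_le_right
      _ ≤ x * neg x := rmono' inf_le_left
  rw [idem] at h1
  exact h1.trans (mul_neg_le x)

private lemma neg_one : neg (1:α) = 0 := by
  refine le_antisymm ?_ ?_
  · have := mul_neg_le (1:α); rwa [one_mul] at this
  · refine (residuation 1 0 0).mp ?_
    rw [one_mul]

private lemma crl_zero_le_one : (0:α) ≤ 1 := by
  have h1 : arrow (0:α) 0 = 1 := by
    have := involutive (1:α)
    rwa [show arrow (1:α) 0 = 0 from neg_one] at this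
  have := (residuation (0:α) 0 0).mp (le_of_eq (idem 0))
  rwa [h1] at this

private lemma zx_mul_self (x : α) : zx x * x = zx x := by
  refine le_antisymm (le_inf ?_ ?_) ?_
  · calc zx x * x ≤ x * x := rmono' inf_le_left
      _ = x := idem x
  · refine (residuation x (zx x * x) 0).mp ?_
    have : x * (zx x * x) = zx x * x := by
      rw [mul_comm x (zx x * x), mul_assoc, idem]
    rw [this]
    calc zx x * x ≤ neg x * x := rmono' inf_le_right
      _ = x * neg x := mul_comm _ _
      _ ≤ 0 := mul_neg_le x
  · have : zx x * zx x ≤ zx x * x := rmono inf_le_left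
    rwa [idem] at this

private lemma zx_mul_neg (x : α) : zx x * neg x = zx x := by
  refine le_antisymm (le_inf ?_ ?_) ?_
  · have h : zx x * neg x ≤ neg (neg x) := by
      refine (residuation (neg x) (zx x * neg x) 0).mp ?_
      have h2 : neg x * (zx x * neg x) = zx x * neg x := by
        rw [mul_comm (neg x) (zx x * neg x), mul_assoc, idem]
      rw [h2]
      calc zx x * neg x ≤ x * neg x := rmono' inf_le_left
        _ ≤ 0 := mul_neg_le x
    exact h.trans_eq (neg_neg' x)
  · calc zx x * neg x ≤ neg x * neg x := rmono' inf_le_right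
      _ = neg x := idem (neg x)
  · have : zx x * zx x ≤ zx x * neg x := rmono inf_le_right
    rwa [idem] at this

private lemma one_le_ox' (x : α) : (1:α) ≤ ox x := by
  have h1 : neg (ox x) ≤ zx x := by
    refine le_inf ?_ ?_
    · have := neg_antitone (le_sup_right : neg x ≤ ox x)
      rwa [neg_neg'] at this
    · exact neg_antitone (le_sup_left : x ≤ ox x)
  have h2 : neg (ox x) ≤ neg (1:α) := by
    rw [neg_one]; exact h1.trans (zx_le_zero' x)
  have := neg_antitone h2
  rwa [neg_neg', neg_neg'] at this

private lemma zx_mul_ox (x : α) : zx x * ox x = zx x := by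
  refine le_antisymm ?_ ?_
  · refine (residuation (zx x) (ox x) (zx x)).mpr (sup_le ?_ ?_) |>.trans ?_
    · exact (residuation (zx x) x (zx x)).mp (le_of_eq (zx_mul_self x))
    · exact (residuation (zx x) (neg x) (zx x)).mp (le_of_eq (zx_mul_neg x))
    · exact le_rfl
  · have : zx x * zx x ≤ zx x * ox x := rmono (inf_le_left.trans le_sup_left)
    rwa [idem] at this

end Aux

open CIdInRL in
theorem stmt1 {α : Type*} [CIdInRL α] (x : α) :
    zx x ≤ 0 ∧ (0 : α) ≤ 1 ∧ (1 : α) ≤ ox x ∧ zx x * ox x = zx x :=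
  ⟨zx_le_zero' x, crl_zero_le_one, one_le_ox' x, zx_mul_ox x⟩
end

section
/- In a commutative idempotent involutive residuated lattice, for every element x and all y, z in the interval B_x := {w | 0_x · w = 0_x and w · 1_x = w} (i.e., 0_x ⊑ w ⊑ 1_x in the monoidal order), one has y · z = y ∧ z. -/
namespace CIdInRL
variable {α : Type*} [CIdInRL α]

lemma mul_le_mul_left' {a b : α} (h : a ≤ b) (c : α) : c * a ≤ c * b := by
  rw [residuation]
  exact le_trans h ((residuation c b (c * b)).mp le_rfl)

lemma mul_neg_le (a : α) : a * neg a ≤ 0 :=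
  (residuation a (neg a) 0).mpr le_rfl

lemma neg_antitone {a b : α} (h : a ≤ b) : neg b ≤ neg a := by
  rw [neg, neg, ← residuation]
  calc a * neg b = neg b * a := mul_comm _ _
    _ ≤ neg b * b := mul_le_mul_left' h _
    _ = b * neg b := mul_comm _ _
    _ ≤ 0 := mul_neg_le b

lemma neg_neg (a : α) : neg (neg a) = a := by
  show arrow (arrow a 0) 0 = a
  exact involutive a

lemma le_neg_iff {a b : α} : a ≤ neg b ↔ b ≤ neg a := by
  constructor
  · intro h
    have := neg_antitone h
    rwa [neg, neg, involutive] at this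
  · intro h
    have := neg_antitone h
    rwa [neg, neg, involutive] at this

lemma neg_le_iff {a b : α} : neg a ≤ b ↔ neg b ≤ a := by
  constructor
  · intro h
    have h2 := neg_antitone h
    rwa [neg_neg] at h2
  · intro h
    have h2 := neg_antitone h
    rwa [neg_neg] at h2

lemma neg_inf (a b : α) : neg (a ⊓ b) = neg a ⊔ neg b := by
  apply le_antisymm
  · rw [neg_le_iff]
    apply le_inf
    · exact le_trans (neg_antitone le_sup_left) (le_of_eq (neg_neg a))
    · exact le_trans (neg_antitone le_sup_right) (le_of_eq (neg_neg b))
  · exact sup_le (neg_antitone inf_le_left) (neg_antitone inf_le_right)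

lemma inf_le_mul (a b : α) : a ⊓ b ≤ a * b := by
  calc a ⊓ b = (a ⊓ b) * (a ⊓ b) := (idem _).symm
    _ ≤ (a ⊓ b) * b := mul_le_mul_left' inf_le_right _
    _ = b * (a ⊓ b) := mul_comm _ _
    _ ≤ b * a := mul_le_mul_left' inf_le_left _
    _ = a * b := mul_comm _ _

lemma zx_le_zero (x : α) : zx x ≤ 0 := le_trans (inf_le_mul x (neg x)) (mul_neg_le x)

lemma neg_zx (x : α) : neg (zx x) = ox x := by
  rw [zx, neg_inf, ox]
  show neg x ⊔ arrow (arrow x 0) 0 = _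
  rw [involutive, sup_comm]

lemma le_ox {x w : α} (h : mleq (zx x) w) : w ≤ ox x := by
  rw [← neg_zx, neg, ← residuation]
  rw [mleq] at h
  rw [h]
  exact zx_le_zero x

end CIdInRL

open CIdInRL in
theorem stmt2 {α : Type*} [CIdInRL α] (x y z : α)
    (hy : mleq (zx x) y ∧ mleq y (ox x)) (hz : mleq (zx x) z ∧ mleq z (ox x)) :
    y * z = y ⊓ z := by
  apply le_antisymm
  · apply le_inf
    · calc y * z ≤ y * ox x := mul_le_mul_left' (le_ox hz.1) y
        _ = y := hy.2
    · calc y * z = z * y := mul_comm _ _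
        _ ≤ z * ox x := mul_le_mul_left' (le_ox hy.1) z
        _ = z := hz.2
  · exact inf_le_mul y z
end

section
/- In a commutative idempotent involutive residuated lattice, for every element x, the interval B_x := {y | 0_x ⊑ y ⊑ 1_x} with operations · (as meet), ∨ (as join), ¬ (as complement), bottom 0_x and top 1_x forms a Boolean algebra. -/
namespace StmtAux
open CIdInRL
variable {α : Type*} [CIdInRL α]

lemma resid {a b c : α} : a * b ≤ c ↔ b ≤ arrow a c := CIdInRL.residuation a b c

lemma le_neg_iff {a b : α} : a ≤ neg b ↔ b * a ≤ 0 := resid.symm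

lemma neg_neg' (a : α) : neg (neg a) = a := CIdInRL.involutive a

lemma mul_le_mul_right' {b c : α} (a : α) (h : b ≤ c) : a * b ≤ a * c :=
  resid.mpr (h.trans (resid.mp le_rfl))

lemma mul_le_mul_left' {b c : α} (a : α) (h : b ≤ c) : b * a ≤ c * a := by
  rw [mul_comm b a, mul_comm c a]; exact mul_le_mul_right' a h

lemma mul_le_mul'' {a b c d : α} (h1 : a ≤ b) (h2 : c ≤ d) : a * c ≤ b * d :=
  (mul_le_mul_right' a h2).trans (mul_le_mul_left' d h1)

lemma mul_neg_self_le (a : α) : a * neg a ≤ 0 := le_neg_iff.mp le_rfl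

lemma neg_antitone {a b : α} (h : a ≤ b) : neg b ≤ neg a :=
  le_neg_iff.mpr ((mul_le_mul_left' (neg b) h).trans (mul_neg_self_le b))

lemma le_neg_comm {a b : α} : a ≤ neg b ↔ b ≤ neg a := by
  rw [le_neg_iff, le_neg_iff, mul_comm]

lemma mul_sup' (a b c : α) : a * (b ⊔ c) = a * b ⊔ a * c := by
  apply le_antisymm
  · exact resid.mpr (sup_le (resid.mp le_sup_left) (resid.mp le_sup_right))
  · exact sup_le (mul_le_mul_right' a le_sup_left) (mul_le_mul_right' a le_sup_right)

lemma mul_neg_self_eq_inf (a : α) : a * neg a = a ⊓ neg a := by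
  apply le_antisymm
  · refine le_inf ?_ ?_
    · have h : neg a * (a * neg a) ≤ 0 := by
        have : neg a * (a * neg a) = a * neg a := by
          rw [mul_comm a (neg a), ← mul_assoc, CIdInRL.idem]
        rw [this]; exact mul_neg_self_le a
      have := le_neg_iff.mpr h
      rwa [neg_neg'] at this
    · refine le_neg_iff.mpr ?_
      have : a * (a * neg a) = a * neg a := by rw [← mul_assoc, CIdInRL.idem]
      rw [this]; exact mul_neg_self_le a
  · calc a ⊓ neg a = (a ⊓ neg a) * (a ⊓ neg a) := (CIdInRL.idem _).symm
      _ ≤ a * neg a := mul_le_mul'' inf_le_left inf_le_right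

lemma neg_sup' (a b : α) : neg (a ⊔ b) = neg a ⊓ neg b := by
  apply le_antisymm
  · exact le_inf (neg_antitone le_sup_left) (neg_antitone le_sup_right)
  · refine le_neg_iff.mpr ?_
    rw [mul_comm, mul_sup']
    refine sup_le ?_ ?_
    · exact (mul_le_mul_left' a inf_le_left).trans
        (by rw [mul_comm]; exact mul_neg_self_le a)
    · exact (mul_le_mul_left' b inf_le_right).trans
        (by rw [mul_comm]; exact mul_neg_self_le b)

lemma neg_inf' (a b : α) : neg (a ⊓ b) = neg a ⊔ neg b := by
  have := neg_sup' (neg a) (neg b)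
  rw [neg_neg', neg_neg'] at this
  rw [← this, neg_neg']

lemma neg_zx (x : α) : neg (zx x) = ox x := by
  unfold zx ox; rw [neg_inf', neg_neg']; exact sup_comm _ _

lemma neg_ox (x : α) : neg (ox x) = zx x := by
  rw [← neg_zx, neg_neg']

lemma zx_le_zero (x : α) : zx x ≤ (0 : α) := by
  calc zx x = zx x * zx x := (CIdInRL.idem _).symm
    _ ≤ x * neg x := mul_le_mul'' inf_le_left inf_le_right
    _ ≤ 0 := mul_neg_self_le x

lemma one_le_ox (x : α) : (1 : α) ≤ ox x := by
  rw [← neg_zx]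
  exact le_neg_iff.mpr (by rw [mul_one]; exact zx_le_zero x)

lemma neg_one' : neg (1 : α) = 0 := by
  apply le_antisymm
  · have h : (1 : α) * neg 1 ≤ 0 := resid.mpr le_rfl
    rwa [one_mul] at h
  · exact resid.mp (by rw [one_mul])

lemma zero_le_one' : (0 : α) ≤ 1 := by
  have h : (0 : α) * 0 ≤ 0 := by rw [CIdInRL.idem]
  have h1 : (0 : α) ≤ neg 0 := le_neg_iff.mpr h
  have h2 : neg (0 : α) = 1 := by rw [← neg_one', neg_neg']
  rwa [h2] at h1

lemma zx_le_ox (x : α) : zx x ≤ ox x :=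
  (zx_le_zero x).trans (zero_le_one'.trans (one_le_ox x))

lemma zx_mul_ox (x : α) : zx x * ox x = zx x := by
  have hz : zx x = x * neg x := (mul_neg_self_eq_inf x).symm
  have h1 : zx x * x = zx x := by
    rw [hz, mul_right_comm, CIdInRL.idem]
  have h2 : zx x * neg x = zx x := by
    rw [hz, mul_assoc, CIdInRL.idem]
  show zx x * (x ⊔ neg x) = zx x
  rw [mul_sup', h1, h2, sup_idem]

section Mem
variable {x a : α}

lemma mem_le_ox (h1 : mleq (zx x) a) : a ≤ ox x := by
  rw [← neg_zx]
  exact le_neg_iff.mpr (by rw [h1]; exact zx_le_zero x)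

lemma zx_le_mem (h1 : mleq (zx x) a) (h2 : mleq a (ox x)) : zx x ≤ a := by
  have : zx x * a ≤ ox x * a := mul_le_mul_left' a (zx_le_ox x)
  rw [h1, mul_comm (ox x) a, h2] at this
  exact this

lemma zx_le_neg_mem (h1 : mleq (zx x) a) : zx x ≤ neg a := by
  rw [← neg_ox]
  exact neg_antitone (mem_le_ox h1)

lemma neg_mem_le_ox (h1 : mleq (zx x) a) (h2 : mleq a (ox x)) : neg a ≤ ox x := by
  rw [← neg_zx]
  exact neg_antitone (zx_le_mem h1 h2)

lemma neg_mem1 (h1 : mleq (zx x) a) (h2 : mleq a (ox x)) : mleq (zx x) (neg a) := by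
  apply le_antisymm
  · calc zx x * neg a ≤ zx x * ox x :=
        mul_le_mul_right' _ (neg_mem_le_ox h1 h2)
      _ = zx x := zx_mul_ox x
  · calc zx x = zx x * zx x := (CIdInRL.idem _).symm
      _ ≤ zx x * neg a := mul_le_mul_right' _ (zx_le_neg_mem h1)

lemma neg_mem2 (_h1 : mleq (zx x) a) (h2 : mleq a (ox x)) : mleq (neg a) (ox x) := by
  apply le_antisymm
  · refine le_neg_iff.mpr ?_
    have h3 : a * (neg a * ox x) = a * neg a := by
      rw [← mul_assoc, mul_right_comm, h2]
    rw [h3]; exact mul_neg_self_le a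
  · calc neg a = 1 * neg a := (one_mul _).symm
      _ ≤ ox x * neg a := mul_le_mul_left' _ (one_le_ox x)
      _ = neg a * ox x := mul_comm _ _

lemma mem_mul_neg (h1 : mleq (zx x) a) (h2 : mleq a (ox x)) : a * neg a = zx x := by
  apply le_antisymm
  · rw [← neg_ox]
    refine le_neg_iff.mpr ?_
    have : ox x * (a * neg a) = a * neg a := by
      rw [← mul_assoc, mul_comm (ox x) a, h2]
    rw [this]; exact mul_neg_self_le a
  · rw [mul_neg_self_eq_inf]
    exact le_inf (zx_le_mem h1 h2) (zx_le_neg_mem h1)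

lemma mem_sup_neg (h1 : mleq (zx x) a) (h2 : mleq a (ox x)) : a ⊔ neg a = ox x := by
  have h := congrArg neg (mem_mul_neg h1 h2)
  rw [mul_neg_self_eq_inf, neg_inf', neg_neg', neg_zx, sup_comm (neg a) a] at h
  exact h

end Mem

lemma mem_mul_le_left {x a b : α} (ha1 : mleq (zx x) a) (ha2 : mleq a (ox x))
    (hb1 : mleq (zx x) b) : a * b ≤ a := by
  have h : neg a * (a * b) ≤ 0 := by
    have : neg a * (a * b) = zx x * b := by
      rw [← mul_assoc, mul_comm (neg a) a, mem_mul_neg ha1 ha2]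
    rw [this, hb1]; exact zx_le_zero x
  have := le_neg_iff.mpr h
  rwa [neg_neg'] at this

lemma mem_mul_sup_self {x a b : α} (ha1 : mleq (zx x) a) (ha2 : mleq a (ox x))
    (hb1 : mleq (zx x) b) : a * (a ⊔ b) = a := by
  rw [mul_sup', CIdInRL.idem]
  exact sup_eq_left.mpr (mem_mul_le_left ha1 ha2 hb1)

/-- The Boolean algebra structure on B_x. -/
def boolB (x : α) : BooleanAlgebra {y : α // mleq (zx x) y ∧ mleq y (ox x)} where
  le a b := mleq a.1 b.1
  lt a b := mleq a.1 b.1 ∧ ¬ mleq b.1 a.1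
  lt_iff_le_not_ge _ _ := Iff.rfl
  le_refl a := CIdInRL.idem a.1
  le_trans a b c h1 h2 := by
    show a.1 * c.1 = a.1
    calc a.1 * c.1 = (a.1 * b.1) * c.1 := by rw [h1]
      _ = a.1 * (b.1 * c.1) := mul_assoc _ _ _
      _ = a.1 * b.1 := by rw [h2]
      _ = a.1 := h1
  le_antisymm a b h1 h2 := by
    apply Subtype.ext
    rw [← h1, mul_comm]
    exact h2
  sup a b := ⟨a.1 ⊔ b.1, by
      show zx x * (a.1 ⊔ b.1) = zx x
      rw [mul_sup', a.2.1, b.2.1, sup_idem], by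
      show (a.1 ⊔ b.1) * ox x = a.1 ⊔ b.1
      rw [mul_comm, mul_sup', mul_comm (ox x) a.1, mul_comm (ox x) b.1, a.2.2, b.2.2]⟩
  le_sup_left a b := by
    show a.1 * (a.1 ⊔ b.1) = a.1
    exact mem_mul_sup_self a.2.1 a.2.2 b.2.1
  le_sup_right a b := by
    show b.1 * (a.1 ⊔ b.1) = b.1
    rw [mul_sup', CIdInRL.idem]
    exact sup_eq_right.mpr (mem_mul_le_left b.2.1 b.2.2 a.2.1)
  sup_le a b c h1 h2 := by
    show (a.1 ⊔ b.1) * c.1 = a.1 ⊔ b.1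
    rw [mul_comm, mul_sup', mul_comm c.1 a.1, mul_comm c.1 b.1, h1, h2]
  inf a b := ⟨a.1 * b.1, by
      show zx x * (a.1 * b.1) = zx x
      rw [← mul_assoc, a.2.1, b.2.1], by
      show (a.1 * b.1) * ox x = a.1 * b.1
      rw [mul_assoc, b.2.2]⟩
  inf_le_left a b := by
    show (a.1 * b.1) * a.1 = a.1 * b.1
    rw [mul_right_comm, CIdInRL.idem]
  inf_le_right a b := by
    show (a.1 * b.1) * b.1 = a.1 * b.1
    rw [mul_assoc, CIdInRL.idem]
  le_inf c a b h1 h2 := by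
    show c.1 * (a.1 * b.1) = c.1
    rw [← mul_assoc, h1, h2]
  le_sup_inf a b c := by
    show ((a.1 ⊔ b.1) * (a.1 ⊔ c.1)) * (a.1 ⊔ b.1 * c.1) = (a.1 ⊔ b.1) * (a.1 ⊔ c.1)
    have E : (a.1 ⊔ b.1) * (a.1 ⊔ c.1) = a.1 ⊔ b.1 * c.1 := by
      calc (a.1 ⊔ b.1) * (a.1 ⊔ c.1)
          = (a.1 ⊔ b.1) * a.1 ⊔ (a.1 ⊔ b.1) * c.1 := mul_sup' _ _ _
        _ = a.1 ⊔ (a.1 * c.1 ⊔ b.1 * c.1) := by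
            rw [mul_comm (a.1 ⊔ b.1) a.1, mem_mul_sup_self a.2.1 a.2.2 b.2.1,
              mul_comm (a.1 ⊔ b.1) c.1, mul_sup', mul_comm c.1 a.1, mul_comm c.1 b.1]
        _ = (a.1 ⊔ a.1 * c.1) ⊔ b.1 * c.1 := (sup_assoc _ _ _).symm
        _ = a.1 ⊔ b.1 * c.1 := by
            rw [sup_eq_left.mpr (mem_mul_le_left a.2.1 a.2.2 c.2.1)]
    rw [E, CIdInRL.idem]
  compl a := ⟨neg a.1, neg_mem1 a.2.1 a.2.2, neg_mem2 a.2.1 a.2.2⟩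
  top := ⟨ox x, zx_mul_ox x, CIdInRL.idem _⟩
  bot := ⟨zx x, CIdInRL.idem _, zx_mul_ox x⟩
  inf_compl_le_bot a := by
    show (a.1 * neg a.1) * zx x = a.1 * neg a.1
    rw [mem_mul_neg a.2.1 a.2.2, CIdInRL.idem]
  top_le_sup_compl a := by
    show ox x * (a.1 ⊔ neg a.1) = ox x
    rw [mem_sup_neg a.2.1 a.2.2, CIdInRL.idem]
  le_top a := a.2.2
  bot_le a := a.2.1

end StmtAux

open CIdInRL in
theorem stmt6 {α : Type*} [CIdInRL α] (x : α) :
    ∃ B : BooleanAlgebra {y : α // mleq (zx x) y ∧ mleq y (ox x)},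
      (∀ a b : {y : α // mleq (zx x) y ∧ mleq y (ox x)}, (B.inf a b).1 = a.1 * b.1) ∧
      (∀ a b : {y : α // mleq (zx x) y ∧ mleq y (ox x)}, (B.sup a b).1 = a.1 ⊔ b.1) ∧
      (∀ a : {y : α // mleq (zx x) y ∧ mleq y (ox x)}, (B.compl a).1 = neg a.1) ∧
      (B.bot.1 = zx x) ∧ (B.top.1 = ox x) :=
  ⟨StmtAux.boolB x, fun _ _ => rfl, fun _ _ => rfl, fun _ => rfl, rfl, rfl⟩
end

section
/- In a commutative idempotent involutive residuated lattice, if x ⊑ y in the monoidal order (x·y = x), then 0_x ⊑ 0_y (i.e., 0_x · 0_y = 0_x). -/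
namespace CIdInRL
variable {α : Type*} [CIdInRL α]

lemma mul_le_mul'' {a b c d : α} (h1 : a ≤ c) (h2 : b ≤ d) : a * b ≤ c * d := by
  have h4 : c * b ≤ c * d :=
    (residuation c b (c*d)).2 (le_trans h2 ((residuation c d (c*d)).1 le_rfl))
  calc a * b = b * a := mul_comm _ _
    _ ≤ b * c := (residuation b a (b*c)).2 (le_trans h1 ((residuation b c (b*c)).1 le_rfl))
    _ = c * b := mul_comm _ _
    _ ≤ c * d := h4

lemma mul_neg_le' (x : α) : x * arrow x 0 ≤ 0 :=
  (residuation x (arrow x 0) 0).2 le_rfl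

end CIdInRL

open CIdInRL in
theorem stmt9 {α : Type*} [CIdInRL α] (x y : α) (h : mleq x y) : mleq (zx x) (zx y) := by
  unfold mleq zx neg at *
  set a := x ⊓ arrow x 0 with ha
  set b := y ⊓ arrow y 0 with hb
  have hax : a ≤ x := inf_le_left
  have han : a ≤ arrow x 0 := inf_le_right
  have hby : b ≤ y := inf_le_left
  have hbn : b ≤ arrow y 0 := inf_le_right
  have h00 : (0:α) * 0 = 0 := CIdInRL.idem 0
  have hxa : x * a ≤ (0:α) := le_trans (mul_le_mul'' le_rfl han) (mul_neg_le' x)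
  have hyb : y * b ≤ (0:α) := le_trans (mul_le_mul'' le_rfl hbn) (mul_neg_le' y)
  -- a * b ≤ a
  have h1 : a * b ≤ x := by
    calc a * b ≤ x * y := mul_le_mul'' hax hby
      _ = x := h
  have h2 : x * (a * b) ≤ (0:α) := by
    calc x * (a * b) = (x * y) * (a * b) := by rw [h]
      _ = (x * a) * (y * b) := mul_mul_mul_comm x y a b
      _ ≤ 0 * 0 := mul_le_mul'' hxa hyb
      _ = 0 := h00
  have h3 : a * b ≤ arrow x 0 := (CIdInRL.residuation x (a*b) 0).1 h2
  have hle1 : a * b ≤ a := le_inf h1 h3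
  -- a ≤ b
  have h4 : y * a ≤ (0:α) := by
    calc y * a = y * (a * a) := by rw [CIdInRL.idem]
      _ ≤ y * (x * arrow x 0) := mul_le_mul'' le_rfl (mul_le_mul'' hax han)
      _ = (x * y) * arrow x 0 := by rw [← mul_assoc, mul_comm y x]
      _ = x * arrow x 0 := by rw [h]
      _ ≤ 0 := mul_neg_le' x
  have h5 : a ≤ arrow y 0 := (CIdInRL.residuation y a 0).1 h4
  have h6 : arrow y 0 * a ≤ (0:α) := by
    calc arrow y 0 * a = arrow y 0 * (a * a) := by rw [CIdInRL.idem]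
      _ ≤ arrow y 0 * (x * arrow x 0) := mul_le_mul'' le_rfl (mul_le_mul'' hax han)
      _ = arrow y 0 * ((x * y) * arrow x 0) := by rw [h]
      _ = (y * arrow y 0) * (x * arrow x 0) := by ac_rfl
      _ ≤ 0 * 0 := mul_le_mul'' (mul_neg_le' y) (mul_neg_le' x)
      _ = 0 := h00
  have h7 : a ≤ y := by
    have := (CIdInRL.residuation (arrow y 0) a 0).1 h6
    rwa [CIdInRL.involutive] at this
  have hab : a ≤ b := le_inf h7 h5
  have hle2 : a ≤ a * b := by
    calc a = a * a := (CIdInRL.idem a).symm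
      _ ≤ a * b := mul_le_mul'' le_rfl hab
  exact le_antisymm hle1 hle2
end

section
/- In a commutative idempotent involutive residuated lattice, for all x, y: 0_x · 0_y = 0_{x·y} and 1_x · 1_y = 1_{x·y}. -/
namespace CIdInRLAux
open CIdInRL
variable {α : Type*} [CIdInRL α]

lemma le_neg_iff (a b : α) : a ≤ neg b ↔ b * a ≤ 0 :=
  (residuation b a 0).symm

lemma neg_neg (a : α) : neg (neg a) = a := involutive a

lemma mul_le_mul_right' {a b : α} (h : a ≤ b) (c : α) : a * c ≤ b * c := by
  rw [mul_comm a c, mul_comm b c]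
  exact (residuation c a (c * b)).mpr (h.trans ((residuation c b (c * b)).mp le_rfl))

lemma mul_le_mul'' {a b c d : α} (h1 : a ≤ b) (h2 : c ≤ d) : a * c ≤ b * d :=
  (mul_le_mul_right' h1 c).trans (by rw [mul_comm b c, mul_comm b d]; exact mul_le_mul_right' h2 b)

lemma mul_neg_self_le (a : α) : a * neg a ≤ 0 :=
  (residuation a (neg a) 0).mpr le_rfl

lemma neg_antitone {a b : α} (h : a ≤ b) : neg b ≤ neg a :=
  (le_neg_iff _ _).mpr ((mul_le_mul_right' h (neg b)).trans (mul_neg_self_le b))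

lemma le_iff_neg {a b : α} : a ≤ b ↔ neg b ≤ neg a := by
  constructor
  · exact neg_antitone
  · intro h
    have := neg_antitone h
    rwa [neg_neg, neg_neg] at this

lemma neg_sup (a b : α) : neg (a ⊔ b) = neg a ⊓ neg b := by
  apply le_antisymm
  · exact le_inf (neg_antitone le_sup_left) (neg_antitone le_sup_right)
  · rw [le_iff_neg, neg_neg]
    exact sup_le (le_iff_neg.mpr (by rw [neg_neg]; exact inf_le_left))
      (le_iff_neg.mpr (by rw [neg_neg]; exact inf_le_right))

lemma neg_inf (a b : α) : neg (a ⊓ b) = neg a ⊔ neg b := by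
  have := neg_sup (neg a) (neg b)
  rw [neg_neg, neg_neg] at this
  rw [← this, neg_neg]

lemma arrow_eq (a b : α) : arrow a b = neg (a * neg b) := by
  apply le_antisymm
  · rw [le_iff_neg, neg_neg, le_neg_iff]
    have h1 : a * arrow a b ≤ b := (residuation a (arrow a b) b).mpr le_rfl
    calc arrow a b * (a * neg b) = (a * arrow a b) * neg b := by
          rw [mul_comm (arrow a b), mul_right_comm a (neg b)]
    _ ≤ b * neg b := mul_le_mul_right' h1 _
    _ ≤ 0 := mul_neg_self_le b
  · have key : a * neg (a * neg b) ≤ neg (neg b) := by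
      rw [le_neg_iff]
      calc neg b * (a * neg (a * neg b)) = (a * neg b) * neg (a * neg b) := by
            rw [mul_comm (neg b), mul_right_comm a (neg (a * neg b))]
      _ ≤ 0 := mul_neg_self_le _
    rw [neg_neg] at key
    exact (residuation a (neg (a * neg b)) b).mp key

lemma neg_one : neg (1 : α) = 0 := by
  apply le_antisymm
  · have := (residuation (1:α) (neg 1) 0).mpr le_rfl
    rwa [one_mul] at this
  · exact (residuation (1:α) 0 0).mp (by rw [one_mul])

lemma neg_zero : neg (0 : α) = 1 := by rw [← neg_one, neg_neg]

lemma zero_le_one' : (0 : α) ≤ 1 := by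
  rw [← neg_zero]
  exact (residuation 0 0 0).mp (le_of_eq (idem 0))

lemma zx_eq_mul (a : α) : zx a = a * neg a := by
  have h0 : a * neg a ≤ (1 : α) := (mul_neg_self_le a).trans zero_le_one'
  apply le_antisymm
  · calc zx a = zx a * zx a := (idem _).symm
    _ ≤ a * neg a := mul_le_mul'' inf_le_left inf_le_right
  · refine le_inf ?_ ?_
    · have : a * neg a * a = a * neg a := by rw [mul_right_comm, idem]
      calc a * neg a = a * neg a * a := this.symm
      _ ≤ 1 * a := mul_le_mul_right' h0 a
      _ = a := one_mul a
    · have : a * neg a * neg a = a * neg a := by rw [mul_assoc, idem]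
      calc a * neg a = a * neg a * neg a := this.symm
      _ ≤ 1 * neg a := mul_le_mul_right' h0 _
      _ = neg a := one_mul _

lemma zx_le_zero (a : α) : zx a ≤ (0 : α) := (zx_eq_mul a).le.trans (mul_neg_self_le a)

lemma zx_le_one (a : α) : zx a ≤ (1 : α) := (zx_le_zero a).trans zero_le_one'

lemma neg_zx (a : α) : neg (zx a) = ox a := by
  rw [zx, neg_inf, neg_neg, ox, sup_comm]

lemma neg_ox (a : α) : neg (ox a) = zx a := by
  rw [← neg_zx, neg_neg]

lemma ox_eq_arrow (a : α) : ox a = arrow a a := by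
  rw [arrow_eq, ← zx_eq_mul, neg_zx]

lemma one_le_ox (a : α) : (1 : α) ≤ ox a := by
  rw [le_iff_neg, neg_one, neg_ox]
  exact zx_le_zero a

lemma mul_inf_of_le_one {a b : α} (ha : a ≤ 1) (hb : b ≤ 1) : a * b = a ⊓ b := by
  apply le_antisymm
  · refine le_inf ?_ ?_
    · calc a * b ≤ a * 1 := mul_le_mul'' le_rfl hb
      _ = a := mul_one a
    · calc a * b ≤ 1 * b := mul_le_mul_right' ha b
      _ = b := one_mul b
  · calc a ⊓ b = (a ⊓ b) * (a ⊓ b) := (idem _).symm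
    _ ≤ a * b := mul_le_mul'' inf_le_left inf_le_right

lemma mul_sup_of_one_le {a b : α} (ha : 1 ≤ a) (hb : 1 ≤ b) : a * b = a ⊔ b := by
  apply le_antisymm
  · calc a * b ≤ (a ⊔ b) * (a ⊔ b) := mul_le_mul'' le_sup_left le_sup_right
    _ = a ⊔ b := idem _
  · refine sup_le ?_ ?_
    · calc a = a * 1 := (mul_one a).symm
      _ ≤ a * b := mul_le_mul'' le_rfl hb
    · calc b = 1 * b := (one_mul b).symm
      _ ≤ a * b := mul_le_mul_right' ha b

lemma le_ox_mul (x y : α) : x ≤ ox (x * y) := by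
  rw [ox_eq_arrow]
  exact (residuation (x * y) x (x * y)).mp (le_of_eq (by rw [mul_right_comm, idem]))

lemma zx_mul_le_left (x y : α) : zx (x * y) ≤ x := by
  have h : zx (x * y) * x = zx (x * y) := by
    rw [zx_eq_mul]
    rw [mul_right_comm (x*y) (neg (x*y)) x, mul_right_comm x y x, idem]
  calc zx (x * y) = zx (x * y) * x := h.symm
  _ ≤ 1 * x := mul_le_mul_right' (zx_le_one _) x
  _ = x := one_mul x

lemma zx_mul_le_neg_left (x y : α) : zx (x * y) ≤ neg x := by
  rw [le_iff_neg, neg_neg, neg_zx]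
  exact le_ox_mul x y

lemma zx_inf_le (x y : α) : zx x ⊓ zx y ≤ zx (x * y) := by
  rw [← mul_inf_of_le_one (zx_le_one x) (zx_le_one y)]
  refine le_inf ?_ ?_
  · exact mul_le_mul'' inf_le_left inf_le_left
  · rw [le_neg_iff]
    have hx : x * zx x ≤ (0:α) := by
      rw [zx_eq_mul, ← mul_assoc, idem]; exact mul_neg_self_le x
    have hy : y * zx y ≤ (0:α) := by
      rw [zx_eq_mul, ← mul_assoc, idem]; exact mul_neg_self_le y
    calc x * y * (zx x * zx y) = (x * zx x) * (y * zx y) := mul_mul_mul_comm x y (zx x) (zx y)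
    _ ≤ 0 * 0 := mul_le_mul'' hx hy
    _ = 0 := idem 0

theorem main (x y : α) : zx x * zx y = zx (x * y) ∧ ox x * ox y = ox (x * y) := by
  have hz : zx (x * y) = zx x ⊓ zx y := by
    refine le_antisymm (le_inf ?_ ?_) (zx_inf_le x y)
    · exact le_inf (zx_mul_le_left x y) (zx_mul_le_neg_left x y)
    · rw [mul_comm]
      exact le_inf (zx_mul_le_left y x) (zx_mul_le_neg_left y x)
  constructor
  · rw [mul_inf_of_le_one (zx_le_one x) (zx_le_one y), hz]
  · rw [mul_sup_of_one_le (one_le_ox x) (one_le_ox y)]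
    apply le_antisymm
    · refine sup_le (sup_le (le_ox_mul x y) ?_) (sup_le ?_ ?_)
      · rw [le_iff_neg, neg_neg, neg_ox]
        exact zx_mul_le_left x y
      · rw [mul_comm]; exact le_ox_mul y x
      · rw [le_iff_neg, neg_neg, neg_ox, mul_comm]
        exact zx_mul_le_left y x
    · rw [le_iff_neg, neg_sup, neg_ox, neg_ox, neg_ox, hz]

end CIdInRLAux

open CIdInRL in
theorem stmt10 {α : Type*} [CIdInRL α] (x y : α) :
    zx x * zx y = zx (x * y) ∧ ox x * ox y = ox (x * y) :=
  CIdInRLAux.main x y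
end

section
/- In a commutative idempotent involutive residuated lattice, for a negative element a (a ≤ 1) and all x, y with x ≤ 1_a and y ≤ 1_a (where 1_a := a ∨ ¬a), one has (x·y) ∨ a = (x ∨ a)·(y ∨ a). -/
namespace CIdInRL

variable {α : Type*} [CIdInRL α]

lemma mul_mono_right' {y z : α} (x : α) (h : y ≤ z) : x * y ≤ x * z :=
  (residuation x y (x * z)).mpr (h.trans ((residuation x z (x * z)).mp le_rfl))

lemma mul_mono_left' {y z : α} (h : y ≤ z) (x : α) : y * x ≤ z * x := by
  rw [mul_comm y x, mul_comm z x]; exact mul_mono_right' x h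

lemma mul_sup' (x y z : α) : x * (y ⊔ z) = x * y ⊔ x * z := by
  apply le_antisymm
  · rw [residuation]
    exact sup_le ((residuation _ _ _).mp le_sup_left)
      ((residuation _ _ _).mp le_sup_right)
  · exact sup_le (mul_mono_right' x le_sup_left) (mul_mono_right' x le_sup_right)

lemma mul_neg_le_zero' (a : α) : a * neg a ≤ (0 : α) :=
  (residuation a (neg a) 0).mpr le_rfl

lemma mul_neg_le_self' (a : α) : a * neg a ≤ a := by
  conv_rhs => rw [← involutive a]
  apply (residuation (arrow a 0) (a * neg a) 0).mp
  have : arrow a 0 * (a * neg a) = a * neg a := by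
    show neg a * (a * neg a) = a * neg a
    rw [mul_comm a (neg a), ← mul_assoc, idem]
  rw [this]
  exact mul_neg_le_zero' a

lemma mul_le_of_le_ox {a x : α} (hx : x ≤ ox a) : a * x ≤ a := by
  calc a * x ≤ a * (a ⊔ neg a) := mul_mono_right' a hx
    _ = a * a ⊔ a * neg a := mul_sup' a a (neg a)
    _ ≤ a := by rw [idem]; exact sup_le le_rfl (mul_neg_le_self' a)

end CIdInRL

open CIdInRL in
theorem stmt15 {α : Type*} [CIdInRL α] (a x y : α) (ha : a ≤ 1)
    (hx : x ≤ ox a) (hy : y ≤ ox a) :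
    (x * y) ⊔ a = (x ⊔ a) * (y ⊔ a) := by
  have expand : (x ⊔ a) * (y ⊔ a) = (x * y ⊔ a * y) ⊔ (x * a ⊔ a * a) := by
    rw [mul_sup' (x ⊔ a) y a, mul_comm (x ⊔ a) y, mul_sup' y x a,
      mul_comm (x ⊔ a) a, mul_sup' a x a, mul_comm y x, mul_comm y a, mul_comm a x]
  apply le_antisymm
  · apply sup_le
    · exact (mul_mono_left' le_sup_left (y ⊔ a)).trans'
        (mul_mono_right' x le_sup_left)
    · calc a = a * a := (idem a).symm
        _ ≤ (x ⊔ a) * (y ⊔ a) :=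
          (mul_mono_left' le_sup_right (y ⊔ a)).trans'
            (mul_mono_right' a le_sup_right)
  · rw [expand]
    apply sup_le <;> apply sup_le
    · exact le_sup_left
    · exact le_sup_right.trans' (mul_le_of_le_ox hy)
    · exact le_sup_right.trans' ((mul_comm a x ▸ mul_le_of_le_ox hx : x * a ≤ a))
    · rw [idem]; exact le_sup_right
end

section
/- In a commutative idempotent involutive residuated lattice, for a negative element a with a ≤ 1 but a ≰ 0, the sets {x | a·x = a} and {¬x | a·x = a} are disjoint. -/
open CIdInRL in
theorem stmt17 {α : Type*} [CIdInRL α] (a : α) (ha : a ≤ 1) (ha0 : ¬ a ≤ 0) :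
    Disjoint {x : α | a * x = a} {y : α | ∃ x : α, a * x = a ∧ y = neg x} := by
  rw [Set.disjoint_left]
  rintro y hy ⟨x, hx, rfl⟩
  apply ha0
  -- a = a * (x * neg x)
  have key : a * (x * neg x) = a := by
    rw [← mul_assoc, hx]; exact hy
  -- x * neg x ≤ 0
  have h1 : x * neg x ≤ (0 : α) :=
    (CIdInRL.residuation x (neg x) 0).mpr le_rfl
  -- a * z ≤ z when a ≤ 1
  have h2 : a * (x * neg x) ≤ x * neg x := by
    rw [mul_comm]
    refine (CIdInRL.residuation _ a _).mpr (le_trans ha ?_)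
    exact (CIdInRL.residuation _ 1 _).mp (by rw [mul_one])
  calc a = a * (x * neg x) := key.symm
    _ ≤ x * neg x := h2
    _ ≤ 0 := h1
end

section
/- In a commutative idempotent involutive residuated lattice, if x, y are both positive (1 ≤ x and 1 ≤ y) then x·y = x ∨ y, and if x, y are both negative (x ≤ 1 and y ≤ 1) then x·y = x ∧ y. -/
namespace CIdInRL
variable {α : Type*} [CIdInRL α]
lemma mul_le_mul_right' {y y' : α} (h : y ≤ y') (x : α) : x * y ≤ x * y' :=
  (residuation x y (x * y')).mpr (h.trans ((residuation x y' (x * y')).mp le_rfl))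

lemma mul_le_mul''_s18 {x x' y y' : α} (hx : x ≤ x') (hy : y ≤ y') : x * y ≤ x' * y' :=
  (mul_le_mul_right' hy x).trans (by rw [mul_comm x y', mul_comm x' y']; exact mul_le_mul_right' hx y')

end CIdInRL

open CIdInRL in
theorem stmt18 {α : Type*} [CIdInRL α] (x y : α) :
    ((1 ≤ x → 1 ≤ y → x * y = x ⊔ y) ∧ (x ≤ 1 → y ≤ 1 → x * y = x ⊓ y)) := by
  constructor
  · intro hx hy
    apply le_antisymm
    · have := mul_le_mul''_s18 (le_sup_left (a := x) (b := y)) (le_sup_right (a := x) (b := y))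
      rwa [idem] at this
    · apply sup_le
      · simpa using mul_le_mul''_s18 (le_refl x) hy
      · simpa using mul_le_mul''_s18 hx (le_refl y)
  · intro hx hy
    apply le_antisymm
    · apply le_inf
      · simpa using mul_le_mul''_s18 (le_refl x) hy
      · simpa using mul_le_mul''_s18 hx (le_refl y)
    · have := mul_le_mul''_s18 (inf_le_left (a := x) (b := y)) (inf_le_right (a := x) (b := y))
      rwa [idem] at this
end
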